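/- Fix an integer m ≥ 2 and positive reals σ_1², …, σ_n². Let G^r be any reduced set for (σ_1², …, σ_n², m). Then Ent(σ²_{G^r}) ≤ 8 ln(m). -/

import Mathlib

open Finset Real
open scoped Classical

/-- Entropy-like function `Ent(a_S) = -∑_{i∈S} (a_i/A) ln (a_i/A)` with `A = ∑_{j∈S} a_j`. -/
noncomputable def ent {ι : Type*} (S : Finset ι) (a : ι → ℝ) : ℝ :=
  -∑ i ∈ S, (a i / ∑ j ∈ S, a j) * Real.log (a i / ∑ j ∈ S, a j)

/-- The minimum variance `σ̲² = min_{i∈[n]} σ_i²`. -/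
noncomputable def sigMin (n : ℕ) [NeZero n] (σ : Fin n → ℝ) : ℝ :=
  Finset.univ.inf' Finset.univ_nonempty σ

/-- The `j`-th variance group `G_j = {i ∈ [n] : 2^{j-1} ≤ σ_i²/σ̲² < 2^j}` (for `j ≥ 1`). -/
noncomputable def grp (n : ℕ) [NeZero n] (σ : Fin n → ℝ) (j : ℕ) : Finset (Fin n) :=
  Finset.univ.filter fun i =>
    (2 : ℝ) ^ (j - 1) ≤ σ i / sigMin n σ ∧ σ i / sigMin n σ < 2 ^ j

/-- `Gr` is a reduced set for `(σ², m)`: `Gr = ∪_j G'_j` where `G'_j = G_j` when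
`|G_j| ≤ 2m`, and `G'_j` is an arbitrary `2m`-element subset of `G_j` otherwise. -/
def IsReducedSet (n : ℕ) [NeZero n] (m : ℕ) (σ : Fin n → ℝ) (Gr : Finset (Fin n)) : Prop :=
  ∃ G' : ℕ → Finset (Fin n),
    (∀ j : ℕ, 1 ≤ j →
      ((grp n σ j).card ≤ 2 * m → G' j = grp n σ j) ∧
      (2 * m < (grp n σ j).card → G' j ⊆ grp n σ j ∧ (G' j).card = 2 * m)) ∧
    (Gr : Set (Fin n)) = ⋃ (j : ℕ) (_ : 1 ≤ j), (G' j : Set (Fin n))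

lemma geom34 (N : ℕ) : ∑ d ∈ Finset.range N, (3/4 : ℝ)^d ≤ 4 := by
  have h := Summable.sum_le_tsum (Finset.range N) (fun i _ => by positivity)
    (summable_geometric_of_lt_one (by norm_num : (0:ℝ) ≤ 3/4) (by norm_num))
  rw [tsum_geometric_of_lt_one (by norm_num) (by norm_num)] at h
  norm_num at h
  linarith

lemma geomlin (N : ℕ) : ∑ d ∈ Finset.range N, (d:ℝ) * (1/2 : ℝ)^d ≤ 2 := by
  have hs : Summable (fun n : ℕ => (n:ℝ) * (1/2:ℝ)^n) :=
    (hasSum_coe_mul_geometric_of_norm_lt_one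
      (r := (1/2:ℝ)) (by rw [Real.norm_eq_abs, abs_of_nonneg] <;> norm_num)).summable
  have h := Summable.sum_le_tsum (Finset.range N) (fun i _ => by positivity) hs
  rw [tsum_coe_mul_geometric_of_norm_lt_one
    (by rw [Real.norm_eq_abs, abs_of_nonneg] <;> norm_num)] at h
  norm_num at h
  linarith


set_option maxHeartbeats 2000000 in
/-- **Lemma.** For `m ≥ 2` and a reduced set `G^r`, `Ent(σ²_{G^r}) ≤ 8 ln m`. -/
theorem stmt_1 (n m : ℕ) [NeZero n] (hm : 2 ≤ m)
    (σ : Fin n → ℝ) (hσ : ∀ i, 0 < σ i)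
    (Gr : Finset (Fin n)) (hGr : IsReducedSet n m σ Gr) :
    ent Gr σ ≤ 8 * Real.log m := by
  have hm1 : (1:ℝ) ≤ (m:ℝ) := by exact_mod_cast le_trans one_le_two hm
  have hmpos : (0:ℝ) < (m:ℝ) := by linarith
  have hlogm : 0 ≤ Real.log m := Real.log_nonneg hm1
  obtain ⟨G', hG'spec, hcov⟩ := hGr
  rcases Gr.eq_empty_or_nonempty with hGe | hGne
  · rw [hGe]; simp [ent]; linarith
  -- basic setup
  set s := sigMin n σ with hs_def
  have hs0 : 0 < s := by
    obtain ⟨i0, _, hi0⟩ := Finset.exists_mem_eq_inf' Finset.univ_nonempty σ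
    rw [hs_def, sigMin, hi0]; exact hσ i0
  have hsle : ∀ i, s ≤ σ i := fun i => Finset.inf'_le σ (Finset.mem_univ i)
  have hr1 : ∀ i, 1 ≤ σ i / s := fun i => (one_le_div hs0).2 (hsle i)
  set jdx : Fin n → ℕ := fun i => Nat.log 2 ⌊σ i / s⌋₊ + 1 with hjdx_def
  have hjdx1 : ∀ i, 1 ≤ jdx i := fun i => Nat.le_add_left 1 _
  -- membership in own group
  have hmem : ∀ i, i ∈ grp n σ (jdx i) := by
    intro i
    have hr := hr1 i
    have hfl1 : 1 ≤ ⌊σ i / s⌋₊ := Nat.le_floor (by exact_mod_cast hr)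
    have hfl0 : ⌊σ i / s⌋₊ ≠ 0 := by omega
    have hlow : ((2:ℕ) ^ (Nat.log 2 ⌊σ i / s⌋₊) : ℝ) ≤ σ i / s := by
      calc ((2:ℕ) ^ (Nat.log 2 ⌊σ i / s⌋₊) : ℝ) ≤ (⌊σ i / s⌋₊ : ℝ) := by
            exact_mod_cast Nat.pow_log_le_self 2 hfl0
        _ ≤ σ i / s := Nat.floor_le (by linarith)
    have hup : σ i / s < ((2:ℕ) ^ (Nat.log 2 ⌊σ i / s⌋₊ + 1) : ℝ) := by
      have h1 : ⌊σ i / s⌋₊ < 2 ^ (Nat.log 2 ⌊σ i / s⌋₊ + 1) :=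
        Nat.lt_pow_succ_log_self (by norm_num) _
      have h2 : (⌊σ i / s⌋₊ : ℝ) + 1 ≤ ((2:ℕ) ^ (Nat.log 2 ⌊σ i / s⌋₊ + 1) : ℝ) := by
        exact_mod_cast Nat.succ_le_of_lt h1
      have h3 : σ i / s < (⌊σ i / s⌋₊ : ℝ) + 1 := Nat.lt_floor_add_one _
      linarith
    simp only [grp, Finset.mem_filter, Finset.mem_univ, true_and, hjdx_def]
    constructor
    · simpa using hlow
    · simpa using hup
  -- uniqueness
  have huniq : ∀ i j, 1 ≤ j → i ∈ grp n σ j → j = jdx i := by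
    intro i j hj hij
    have h1 := hij
    have h2 := hmem i
    simp only [grp, Finset.mem_filter, Finset.mem_univ, true_and] at h1 h2
    by_contra hne
    rcases lt_or_gt_of_ne hne with h | h
    · have : (2:ℝ) ^ j ≤ 2 ^ (jdx i - 1) := pow_le_pow_right₀ one_le_two (by omega)
      linarith [h1.2, h2.1]
    · have : (2:ℝ) ^ (jdx i) ≤ 2 ^ (j - 1) := pow_le_pow_right₀ one_le_two (by omega)
      linarith [h1.1, h2.2]
  -- G' facts
  have hGsub : ∀ j, 1 ≤ j → G' j ⊆ grp n σ j := by
    intro j hj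
    rcases le_or_gt (grp n σ j).card (2 * m) with h | h
    · rw [(hG'spec j hj).1 h]
    · exact ((hG'spec j hj).2 h).1
  have hGcard : ∀ j, 1 ≤ j → (G' j).card ≤ 2 * m := by
    intro j hj
    rcases le_or_gt (grp n σ j).card (2 * m) with h | h
    · rw [(hG'spec j hj).1 h]; exact h
    · exact le_of_eq ((hG'spec j hj).2 h).2
  have hinG : ∀ i ∈ Gr, i ∈ G' (jdx i) := by
    intro i hi
    have : i ∈ (Gr : Set (Fin n)) := hi
    rw [hcov] at this
    simp only [Set.mem_iUnion] at this
    obtain ⟨j, hj, hij⟩ := this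
    have : j = jdx i := huniq i j hj (hGsub j hj hij)
    rwa [this] at hij
  -- J, A, p
  set J := Gr.sup jdx with hJ_def
  have hJle : ∀ i ∈ Gr, jdx i ≤ J := fun i hi => Finset.le_sup hi
  obtain ⟨iJ, hiJm, hiJ⟩ := Finset.exists_mem_eq_sup Gr hGne jdx
  have hJ1 : 1 ≤ J := by rw [hJ_def, hiJ]; exact hjdx1 iJ
  set A := ∑ i ∈ Gr, σ i with hA_def
  have hA : 0 < A := Finset.sum_pos (fun i _ => hσ i) hGne
  have hAl : s * 2 ^ (J - 1) ≤ A := by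
    have h1 := hmem iJ
    simp only [grp, Finset.mem_filter, Finset.mem_univ, true_and] at h1
    have h2 : (2:ℝ) ^ (J - 1) ≤ σ iJ / s := by
      rw [hJ_def, hiJ]; exact h1.1
    have h3 : s * 2 ^ (J - 1) ≤ σ iJ := by
      rw [mul_comm]
      exact (le_div_iff₀ hs0).1 h2
    have h4 : σ iJ ≤ A := Finset.single_le_sum (fun i _ => (hσ i).le) hiJm
    linarith
  set p : Fin n → ℝ := fun i => σ i / A with hp_def
  have hppos : ∀ i, 0 < p i := fun i => div_pos (hσ i) hA
  have hp1 : ∑ i ∈ Gr, p i = 1 := by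
    rw [hp_def]; rw [← Finset.sum_div]; exact div_self hA.ne'
  have hpub : ∀ i ∈ Gr, p i ≤ 2 * (1/2 : ℝ) ^ (J - jdx i) := by
    intro i hi
    have hji : jdx i ≤ J := hJle i hi
    have h1 := hmem i
    simp only [grp, Finset.mem_filter, Finset.mem_univ, true_and] at h1
    have hσub : σ i < s * 2 ^ (jdx i) := by
      rw [mul_comm]
      exact (div_lt_iff₀ hs0).1 h1.2
    have hkey : (2:ℝ) * (1/2 : ℝ) ^ (J - jdx i) * (s * 2 ^ (J - 1)) = s * 2 ^ (jdx i) := by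
      have e1 : (2:ℝ) ^ (J - 1) * 2 = 2 ^ (jdx i) * 2 ^ (J - jdx i) := by
        rw [← pow_succ, ← pow_add]
        congr 1
        omega
      have e2 : ((1:ℝ)/2) ^ (J - jdx i) = ((2:ℝ) ^ (J - jdx i))⁻¹ := by
        rw [div_pow, one_pow, inv_eq_one_div]
      rw [e2]
      have h2pos : (0:ℝ) < 2 ^ (J - jdx i) := by positivity
      field_simp
      linear_combination e1
    have h2 : σ i ≤ 2 * (1/2 : ℝ) ^ (J - jdx i) * A := by
      calc σ i ≤ s * 2 ^ (jdx i) := hσub.le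
        _ = 2 * (1/2 : ℝ) ^ (J - jdx i) * (s * 2 ^ (J - 1)) := hkey.symm
        _ ≤ 2 * (1/2 : ℝ) ^ (J - jdx i) * A := by
            apply mul_le_mul_of_nonneg_left hAl
            positivity
    rw [hp_def]
    exact (div_le_iff₀ hA).2 (by linarith [h2])
  -- fiber machinery
  have hmaps : ∀ i ∈ Gr, jdx i ∈ Finset.Icc 1 J := by
    intro i hi
    rw [Finset.mem_Icc]
    exact ⟨hjdx1 i, hJle i hi⟩
  have hfibcard : ∀ j ∈ Finset.Icc 1 J, (Gr.filter (fun i => jdx i = j)).card ≤ 2 * m := by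
    intro j hj
    rw [Finset.mem_Icc] at hj
    have hsub : Gr.filter (fun i => jdx i = j) ⊆ G' j := by
      intro i hi
      rw [Finset.mem_filter] at hi
      have := hinG i hi.1
      rwa [hi.2] at this
    exact le_trans (Finset.card_le_card hsub) (hGcard j hj.1)
  -- reindexing lemma: for any f : ℕ → ℝ,
  have hreidx : ∀ f : ℕ → ℝ, ∑ j ∈ Finset.Icc 1 J, f (J - j) = ∑ d ∈ Finset.range J, f d := by
    intro f
    have h1 : Finset.Icc 1 J = Finset.Ico 1 (J + 1) := by
      rw [Finset.Ico_add_one_right_eq_Icc]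
    rw [h1, Finset.sum_Ico_eq_sum_range]
    simp only [Nat.add_sub_cancel]
    have h2 : ∀ e ∈ Finset.range J, f (J - (1 + e)) = (fun e => f (J - 1 - e)) e := by
      intro e _
      congr 1
      omega
    rw [Finset.sum_congr rfl h2, Finset.sum_range_reflect]
  -- the reference measure
  set q : Fin n → ℝ := fun i => (1/(8*(m:ℝ))) * (3/4 : ℝ) ^ (J - jdx i) with hq_def
  have hqpos : ∀ i, 0 < q i := by
    intro i
    rw [hq_def]
    positivity
  have hqsum : ∑ i ∈ Gr, q i ≤ 1 := by
    rw [← Finset.sum_fiberwise_of_maps_to hmaps q]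
    have hstep : ∀ j ∈ Finset.Icc 1 J,
        ∑ i ∈ Gr.filter (fun i => jdx i = j), q i ≤ (1/4 : ℝ) * (3/4) ^ (J - j) := by
      intro j hj
      have hconst : ∀ i ∈ Gr.filter (fun i => jdx i = j),
          q i = (1/(8*(m:ℝ))) * (3/4 : ℝ) ^ (J - j) := by
        intro i hi
        rw [Finset.mem_filter] at hi
        rw [hq_def]
        simp only
        rw [hi.2]
      rw [Finset.sum_congr rfl hconst, Finset.sum_const, nsmul_eq_mul]
      have hc := hfibcard j hj
      have hcr : ((Gr.filter (fun i => jdx i = j)).card : ℝ) ≤ 2 * m := by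
        exact_mod_cast hc
      have hnn : (0:ℝ) ≤ (1/(8*(m:ℝ))) * (3/4 : ℝ) ^ (J - j) := by positivity
      calc ((Gr.filter (fun i => jdx i = j)).card : ℝ) * ((1/(8*(m:ℝ))) * (3/4 : ℝ) ^ (J - j))
          ≤ (2 * m) * ((1/(8*(m:ℝ))) * (3/4 : ℝ) ^ (J - j)) :=
            mul_le_mul_of_nonneg_right hcr hnn
        _ = (1/4 : ℝ) * (3/4) ^ (J - j) := by
            field_simp
            ring
      done
    calc ∑ j ∈ Finset.Icc 1 J, ∑ i ∈ Gr.filter (fun i => jdx i = j), q i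
        ≤ ∑ j ∈ Finset.Icc 1 J, (1/4 : ℝ) * (3/4) ^ (J - j) := Finset.sum_le_sum hstep
      _ = (1/4 : ℝ) * ∑ j ∈ Finset.Icc 1 J, (3/4 : ℝ) ^ (J - j) := by
          rw [Finset.mul_sum]
      _ = (1/4 : ℝ) * ∑ d ∈ Finset.range J, (3/4 : ℝ) ^ d := by
          rw [hreidx (fun d => (3/4 : ℝ) ^ d)]
      _ ≤ (1/4 : ℝ) * 4 := by
          have := geom34 J
          nlinarith
      _ = 1 := by norm_num
  -- K
  set K := Nat.log 2 (8 * m) + 1 with hK_def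
  have h8m0 : 8 * m ≠ 0 := by omega
  have hKup : (8 * m : ℕ) < 2 ^ K := Nat.lt_pow_succ_log_self (by norm_num) _
  have hKlow : (2 : ℕ) ^ (K - 1) ≤ 8 * m := by
    rw [hK_def]
    simpa using Nat.pow_log_le_self 2 h8m0
  -- D bound
  have hT : ∑ i ∈ Gr, p i * ((J - jdx i - K : ℕ) : ℝ) ≤ 1 := by
    rw [← Finset.sum_fiberwise_of_maps_to hmaps]
    have hstep : ∀ j ∈ Finset.Icc 1 J,
        ∑ i ∈ Gr.filter (fun i => jdx i = j), p i * ((J - jdx i - K : ℕ) : ℝ)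
        ≤ (4 * (m:ℝ)) * ((1/2 : ℝ) ^ (J - j) * ((J - j - K : ℕ) : ℝ)) := by
      intro j hj
      have hterm : ∀ i ∈ Gr.filter (fun i => jdx i = j),
          p i * ((J - jdx i - K : ℕ) : ℝ)
          ≤ 2 * ((1/2 : ℝ) ^ (J - j) * ((J - j - K : ℕ) : ℝ)) := by
        intro i hi
        rw [Finset.mem_filter] at hi
        have hpb := hpub i hi.1
        rw [hi.2] at hpb
        have hnn : (0:ℝ) ≤ ((J - j - K : ℕ) : ℝ) := Nat.cast_nonneg _
        calc p i * ((J - jdx i - K : ℕ) : ℝ) = p i * ((J - j - K : ℕ) : ℝ) := by rw [hi.2]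
          _ ≤ (2 * (1/2 : ℝ) ^ (J - j)) * ((J - j - K : ℕ) : ℝ) :=
              mul_le_mul_of_nonneg_right hpb hnn
          _ = 2 * ((1/2 : ℝ) ^ (J - j) * ((J - j - K : ℕ) : ℝ)) := by ring
      have hsum := Finset.sum_le_sum hterm
      have hconstsum : ∑ _i ∈ Gr.filter (fun i => jdx i = j),
          2 * ((1/2 : ℝ) ^ (J - j) * ((J - j - K : ℕ) : ℝ))
          ≤ (4 * (m:ℝ)) * ((1/2 : ℝ) ^ (J - j) * ((J - j - K : ℕ) : ℝ)) := by
        rw [Finset.sum_const, nsmul_eq_mul]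
        have hcr : ((Gr.filter (fun i => jdx i = j)).card : ℝ) ≤ 2 * m := by
          exact_mod_cast hfibcard j hj
        have hnn2 : (0:ℝ) ≤ 2 * ((1/2 : ℝ) ^ (J - j) * ((J - j - K : ℕ) : ℝ)) := by positivity
        nlinarith [mul_le_mul_of_nonneg_right hcr hnn2]
      exact le_trans hsum hconstsum
    calc ∑ j ∈ Finset.Icc 1 J, ∑ i ∈ Gr.filter (fun i => jdx i = j),
            p i * ((J - jdx i - K : ℕ) : ℝ)
        ≤ ∑ j ∈ Finset.Icc 1 J,
            (4 * (m:ℝ)) * ((1/2 : ℝ) ^ (J - j) * ((J - j - K : ℕ) : ℝ)) :=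
          Finset.sum_le_sum hstep
      _ = (4 * (m:ℝ)) * ∑ j ∈ Finset.Icc 1 J,
            (1/2 : ℝ) ^ (J - j) * ((J - j - K : ℕ) : ℝ) := by rw [Finset.mul_sum]
      _ = (4 * (m:ℝ)) * ∑ d ∈ Finset.range J,
            (1/2 : ℝ) ^ d * ((d - K : ℕ) : ℝ) := by
          rw [hreidx (fun d => (1/2 : ℝ) ^ d * ((d - K : ℕ) : ℝ))]
      _ ≤ (4 * (m:ℝ)) * ((1/2 : ℝ) ^ K * 2) := by
          apply mul_le_mul_of_nonneg_left _ (by positivity)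
          -- pointwise identity then tail sum
          have hpt : ∀ d, (1/2 : ℝ) ^ d * ((d - K : ℕ) : ℝ)
              = (1/2 : ℝ) ^ K * (((d - K : ℕ) : ℝ) * (1/2 : ℝ) ^ (d - K)) := by
            intro d
            rcases le_or_gt d K with h | h
            · have : d - K = 0 := by omega
              rw [this]
              simp
            · have hdk : K + (d - K) = d := by omega
              have hsplit : (1/2 : ℝ) ^ d = (1/2 : ℝ) ^ K * (1/2 : ℝ) ^ (d - K) := by
                rw [← pow_add, hdk]
              rw [hsplit]
              ring
          rw [Finset.sum_congr rfl (fun d _ => hpt d), ← Finset.mul_sum]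
          have htail : ∑ d ∈ Finset.range J, (((d - K : ℕ) : ℝ) * (1/2 : ℝ) ^ (d - K)) ≤ 2 := by
            have hz : ∑ d ∈ Finset.range J, (((d - K : ℕ) : ℝ) * (1/2 : ℝ) ^ (d - K))
                = ∑ d ∈ Finset.Ico K J, (((d - K : ℕ) : ℝ) * (1/2 : ℝ) ^ (d - K)) := by
              have hsub2 : Finset.Ico K J ⊆ Finset.range J := by
                intro x hx
                rw [Finset.mem_Ico] at hx
                exact Finset.mem_range.2 hx.2
              refine (Finset.sum_subset hsub2 ?_).symm
              intro x hx hnx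
              rw [Finset.mem_range] at hx
              rw [Finset.mem_Ico] at hnx
              have hx0 : x - K = 0 := by omega
              rw [hx0]
              simp
            rw [hz, Finset.sum_Ico_eq_sum_range]
            have he : ∀ e ∈ Finset.range (J - K),
                (((K + e - K : ℕ) : ℝ) * (1/2 : ℝ) ^ (K + e - K)) = (e : ℝ) * (1/2 : ℝ) ^ e := by
              intro e _
              have : K + e - K = e := by omega
              rw [this]
            rw [Finset.sum_congr rfl he]
            exact geomlin (J - K)
          have hpk : (0:ℝ) ≤ (1/2 : ℝ) ^ K := by positivity
          nlinarith
      _ ≤ 1 := by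
          have h2K : (8 * (m:ℝ)) ≤ 2 ^ K := by exact_mod_cast hKup.le
          have hhalf : (1/2 : ℝ) ^ K = ((2:ℝ) ^ K)⁻¹ := by
            rw [div_pow, one_pow, inv_eq_one_div]
          rw [hhalf]
          have h2Kpos : (0:ℝ) < 2 ^ K := by positivity
          rw [mul_comm ((4:ℝ) * m) _, mul_assoc]
          rw [inv_mul_le_iff₀ h2Kpos]
          nlinarith
  have hD : ∑ i ∈ Gr, p i * ((J - jdx i : ℕ) : ℝ) ≤ (K : ℝ) + 1 := by
    have hstep : ∀ i ∈ Gr, p i * ((J - jdx i : ℕ) : ℝ)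
        ≤ p i * ((K : ℝ) + ((J - jdx i - K : ℕ) : ℝ)) := by
      intro i hi
      apply mul_le_mul_of_nonneg_left _ (hppos i).le
      have h1 : (J - jdx i : ℕ) ≤ K + (J - jdx i - K) := by omega
      calc ((J - jdx i : ℕ) : ℝ) ≤ ((K + (J - jdx i - K) : ℕ) : ℝ) := by exact_mod_cast h1
        _ = (K : ℝ) + ((J - jdx i - K : ℕ) : ℝ) := by push_cast; ring
    calc ∑ i ∈ Gr, p i * ((J - jdx i : ℕ) : ℝ)
        ≤ ∑ i ∈ Gr, p i * ((K : ℝ) + ((J - jdx i - K : ℕ) : ℝ)) := Finset.sum_le_sum hstep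
      _ = (K : ℝ) * ∑ i ∈ Gr, p i + ∑ i ∈ Gr, p i * ((J - jdx i - K : ℕ) : ℝ) := by
          rw [Finset.mul_sum, ← Finset.sum_add_distrib]
          congr 1
          ext i
          ring
      _ ≤ (K : ℝ) * 1 + 1 := by
          rw [hp1]
          linarith [hT]
      _ = (K : ℝ) + 1 := by ring
  -- rewrite ent
  have hent : ent Gr σ = ∑ i ∈ Gr, p i * Real.log (1 / p i) := by
    unfold ent
    rw [← hA_def]
    rw [← Finset.sum_neg_distrib]
    apply Finset.sum_congr rfl
    intro i _
    rw [one_div, Real.log_inv]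
    ring
  -- Gibbs inequality
  have hgibbs : ∑ i ∈ Gr, p i * Real.log (1 / p i) ≤ ∑ i ∈ Gr, p i * Real.log (1 / q i) := by
    have key : ∀ i ∈ Gr,
        p i * Real.log (1 / p i) - p i * Real.log (1 / q i) ≤ q i - p i := by
      intro i _
      have hqp : 0 < q i / p i := div_pos (hqpos i) (hppos i)
      have hlog := Real.log_le_sub_one_of_pos hqp
      have hlq : Real.log (q i / p i) = Real.log (1 / p i) - Real.log (1 / q i) := by
        rw [Real.log_div (hqpos i).ne' (hppos i).ne', one_div, one_div,
          Real.log_inv, Real.log_inv]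
        ring
      have h2 := mul_le_mul_of_nonneg_left hlog (hppos i).le
      rw [hlq] at h2
      have hqp2 : p i * (q i / p i - 1) = q i - p i := by
        rw [mul_comm, sub_mul, div_mul_cancel₀ _ (hppos i).ne', one_mul]
      rw [hqp2, mul_sub] at h2
      exact h2
    have hsum := Finset.sum_le_sum key
    rw [Finset.sum_sub_distrib] at hsum
    have h2 : ∑ i ∈ Gr, (q i - p i) ≤ 0 := by
      rw [Finset.sum_sub_distrib, hp1]
      linarith [hqsum]
    linarith
  -- compute log (1/q)
  have hlogq : ∀ i ∈ Gr, Real.log (1 / q i)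
      = Real.log (8 * (m:ℝ)) + ((J - jdx i : ℕ) : ℝ) * Real.log (4/3) := by
    intro i _
    have hq_eq : q i = (1/(8*(m:ℝ))) * (3/4 : ℝ) ^ (J - jdx i) := rfl
    have h1 : Real.log (q i)
        = Real.log (1/(8*(m:ℝ))) + ((J - jdx i : ℕ) : ℝ) * Real.log (3/4) := by
      rw [hq_eq, Real.log_mul (by positivity) (by positivity), Real.log_pow]
    have h2 : Real.log (1/(8*(m:ℝ))) = - Real.log (8*(m:ℝ)) := by
      rw [one_div, Real.log_inv]
    have h3 : Real.log ((3:ℝ)/4) = - Real.log ((4:ℝ)/3) := by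
      rw [← Real.log_inv]
      norm_num
    rw [one_div, Real.log_inv, h1, h2, h3]
    ring
  have hfinal_sum : ∑ i ∈ Gr, p i * Real.log (1 / q i)
      = Real.log (8*(m:ℝ))
        + Real.log (4/3) * ∑ i ∈ Gr, p i * ((J - jdx i : ℕ) : ℝ) := by
    calc ∑ i ∈ Gr, p i * Real.log (1 / q i)
        = ∑ i ∈ Gr, (Real.log (8*(m:ℝ)) * p i
            + Real.log (4/3) * (p i * ((J - jdx i : ℕ) : ℝ))) :=
          Finset.sum_congr rfl (fun i hi => by rw [hlogq i hi]; ring)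
      _ = Real.log (8*(m:ℝ)) * ∑ i ∈ Gr, p i
            + Real.log (4/3) * ∑ i ∈ Gr, p i * ((J - jdx i : ℕ) : ℝ) := by
          rw [Finset.sum_add_distrib, ← Finset.mul_sum, ← Finset.mul_sum]
      _ = _ := by rw [hp1]; ring
  -- scalar facts
  have hL0 : 0 ≤ Real.log ((4:ℝ)/3) := Real.log_nonneg (by norm_num)
  have hlog2 : 0 < Real.log 2 := Real.log_pos (by norm_num)
  have hml : Real.log 2 ≤ Real.log m := by
    apply Real.log_le_log (by norm_num)
    exact_mod_cast hm
  have hlog8m : Real.log (8*(m:ℝ)) = 3 * Real.log 2 + Real.log m := by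
    rw [Real.log_mul (by norm_num) hmpos.ne', show (8:ℝ) = 2^3 by norm_num, Real.log_pow]
    push_cast
    ring
  have hKb : (K:ℝ) * Real.log 2 ≤ 4 * Real.log 2 + Real.log m := by
    have h1 : ((2:ℝ)) ^ (K - 1) ≤ 8 * (m:ℝ) := by exact_mod_cast hKlow
    have h2 := Real.log_le_log (by positivity) h1
    rw [Real.log_pow, hlog8m] at h2
    have hK1 : 1 ≤ K := Nat.le_add_left 1 _
    have h3 : ((K - 1 : ℕ) : ℝ) = (K:ℝ) - 1 := by
      push_cast [hK1]
      ring
    rw [h3] at h2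
    linarith
  have hLr : Real.log ((4:ℝ)/3) ≤ (2/3) * Real.log 2 := by
    have h1 : ((4:ℝ)/3)^6 ≤ (2:ℝ)^4 := by norm_num
    have h2 := Real.log_le_log (by positivity) h1
    rw [Real.log_pow, Real.log_pow] at h2
    push_cast at h2
    linarith
  have hLK : Real.log ((4:ℝ)/3) * ((K:ℝ) + 1)
      ≤ (2/3) * (4 * Real.log 2 + Real.log m) + (2/3) * Real.log 2 := by
    have hK0 : (0:ℝ) ≤ (K:ℝ) := Nat.cast_nonneg _
    have ha : Real.log ((4:ℝ)/3) * (K:ℝ) ≤ ((2/3) * Real.log 2) * (K:ℝ) :=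
      mul_le_mul_of_nonneg_right hLr hK0
    have hb : ((2/3) * Real.log 2) * (K:ℝ) = (2/3) * ((K:ℝ) * Real.log 2) := by ring
    nlinarith [hKb]
  -- conclude
  calc ent Gr σ = ∑ i ∈ Gr, p i * Real.log (1 / p i) := hent
    _ ≤ ∑ i ∈ Gr, p i * Real.log (1 / q i) := hgibbs
    _ = Real.log (8*(m:ℝ))
        + Real.log (4/3) * ∑ i ∈ Gr, p i * ((J - jdx i : ℕ) : ℝ) := hfinal_sum
    _ ≤ Real.log (8*(m:ℝ)) + Real.log (4/3) * ((K:ℝ) + 1) := by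
        have := mul_le_mul_of_nonneg_left hD hL0
        linarith
    _ ≤ 8 * Real.log m := by
        rw [hlog8m]
        linarith [hLK, hml, hlog2]
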